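/- Let k ≥ 3 be a natural number, let β, γ, δ be real numbers, and define α : (0, ∞) → ℝ by α(r) = (β/((1 − k)(2 − k)))·r^(2 − k) + γ·r + δ. Then α satisfies the fourth-order equation 2r²·α⁽⁴⁾(r) + (3k + 4)·r·α⁽³⁾(r) + k(k + 2)·α''(r) = 0 for all r > 0. -/

import Mathlib

/-- For `k ≥ 3`: the function `α(r) = (β/((1−k)(2−k)))·r^(2−k) + γr + δ` satisfies
`2r²α⁽⁴⁾ + (3k+4)rα⁽³⁾ + k(k+2)α'' = 0` for all `r > 0`. -/
theorem radial_biharmonic_rank_ge_three (k : ℕ) (hk : 3 ≤ k) (β γ δ : ℝ) :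
    ∀ r > (0 : ℝ),
      2 * r ^ 2 * (deriv^[4] (fun t : ℝ =>
          β / ((1 - (k : ℝ)) * (2 - (k : ℝ))) * t ^ ((2 : ℤ) - (k : ℤ)) + γ * t + δ) r)
        + (3 * (k : ℝ) + 4) * r * (deriv^[3] (fun t : ℝ =>
          β / ((1 - (k : ℝ)) * (2 - (k : ℝ))) * t ^ ((2 : ℤ) - (k : ℤ)) + γ * t + δ) r)
        + (k : ℝ) * ((k : ℝ) + 2) * (deriv^[2] (fun t : ℝ =>
          β / ((1 - (k : ℝ)) * (2 - (k : ℝ))) * t ^ ((2 : ℤ) - (k : ℤ)) + γ * t + δ) r) = 0 := by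
  set m : ℤ := (2 : ℤ) - (k : ℤ) with hm
  set c : ℝ := β / ((1 - (k : ℝ)) * (2 - (k : ℝ))) with hc
  set f : ℝ → ℝ := fun t : ℝ => c * t ^ m + γ * t + δ with hf
  have h1 : ∀ t : ℝ, 0 < t → deriv f t = c * (m : ℝ) * t ^ (m - 1) + γ := by
    intro t ht
    have H : HasDerivAt f (c * ((m : ℝ) * t ^ (m - 1)) + γ * 1) t := by
      simpa [hf] using
        (((hasDerivAt_zpow m t (Or.inl ht.ne')).const_mul c).add
          ((hasDerivAt_id t).const_mul γ)).add_const δ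
    rw [H.deriv]; ring
  have h2 : ∀ t : ℝ, 0 < t →
      deriv^[2] f t = c * (m : ℝ) * ((m : ℝ) - 1) * t ^ (m - 2) := by
    intro t ht
    have heq : deriv f =ᶠ[nhds t] fun s => c * (m : ℝ) * s ^ (m - 1) + γ := by
      filter_upwards [Ioi_mem_nhds ht] with s hs using h1 s hs
    have H : HasDerivAt (fun s : ℝ => c * (m : ℝ) * s ^ (m - 1) + γ)
        (c * (m : ℝ) * (((m : ℝ) - 1) * t ^ (m - 1 - 1))) t := by
      simpa using
        ((hasDerivAt_zpow (m - 1) t (Or.inl ht.ne')).const_mul (c * (m : ℝ))).add_const γ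
    have : deriv^[2] f t = deriv (deriv f) t := by
      simp [Function.iterate_succ_apply']
    rw [this, heq.deriv_eq, H.deriv]
    have : m - 1 - 1 = m - 2 := by ring
    rw [this]; ring
  have h3 : ∀ t : ℝ, 0 < t →
      deriv^[3] f t = c * (m : ℝ) * ((m : ℝ) - 1) * ((m : ℝ) - 2) * t ^ (m - 3) := by
    intro t ht
    have heq : deriv^[2] f =ᶠ[nhds t] fun s => c * (m : ℝ) * ((m : ℝ) - 1) * s ^ (m - 2) := by
      filter_upwards [Ioi_mem_nhds ht] with s hs using h2 s hs
    have H := (hasDerivAt_zpow (m - 2) t (Or.inl ht.ne')).const_mul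
      (c * (m : ℝ) * ((m : ℝ) - 1))
    have h32 : deriv^[3] f t = deriv (deriv^[2] f) t := by
      simp [Function.iterate_succ_apply']
    rw [h32, heq.deriv_eq, H.deriv]
    have he : m - 2 - 1 = m - 3 := by ring
    rw [he]; push_cast; ring
  have h4 : ∀ t : ℝ, 0 < t →
      deriv^[4] f t
        = c * (m : ℝ) * ((m : ℝ) - 1) * ((m : ℝ) - 2) * ((m : ℝ) - 3) * t ^ (m - 4) := by
    intro t ht
    have heq : deriv^[3] f =ᶠ[nhds t]
        fun s => c * (m : ℝ) * ((m : ℝ) - 1) * ((m : ℝ) - 2) * s ^ (m - 3) := by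
      filter_upwards [Ioi_mem_nhds ht] with s hs using h3 s hs
    have H := (hasDerivAt_zpow (m - 3) t (Or.inl ht.ne')).const_mul
      (c * (m : ℝ) * ((m : ℝ) - 1) * ((m : ℝ) - 2))
    have h43 : deriv^[4] f t = deriv (deriv^[3] f) t := by
      simp [Function.iterate_succ_apply']
    rw [h43, heq.deriv_eq, H.deriv]
    have he : m - 3 - 1 = m - 4 := by ring
    rw [he]; push_cast; ring
  intro r hr
  have hr' : r ≠ 0 := hr.ne'
  rw [h2 r hr, h3 r hr, h4 r hr]
  have e4 : r ^ (m - 4) = r ^ (m - 2) / r ^ 2 := by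
    have h' : m - 4 = m - 2 - 2 := by ring
    rw [h', zpow_sub₀ hr']
    norm_cast
  have e3 : r ^ (m - 3) = r ^ (m - 2) / r := by
    have h' : m - 3 = m - 2 - 1 := by ring
    rw [h', zpow_sub₀ hr', zpow_one]
  rw [e4, e3, hm]
  push_cast
  field_simp
  ring
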